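/- If f : [0, 2π] → ℝ is continuous, nonnegative, and not identically zero, then (∫₀^{2π} f(t)cos t dt)² + (∫₀^{2π} f(t)sin t dt)² < (∫₀^{2π} f(t) dt)². -/

import Mathlib

open Set MeasureTheory intervalIntegral

/-- If `c² + s² = 1` and the continuous nonnegative `f` is positive somewhere on `[0,2π]`,
then there is a point where `f x * (c cos x + s sin x) < f x`. -/
lemma exists_strict_pt (f : ℝ → ℝ) (c s : ℝ) (hcs : c ^ 2 + s ^ 2 = 1)
    (hcont : ContinuousOn f (Set.Icc (0 : ℝ) (2 * Real.pi)))
    (hpos : ∀ t ∈ Set.Icc (0 : ℝ) (2 * Real.pi), 0 ≤ f t)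
    {t₀ : ℝ} (ht₀ : t₀ ∈ Set.Icc (0 : ℝ) (2 * Real.pi)) (hf₀ : 0 < f t₀) :
    ∃ x ∈ Set.Icc (0 : ℝ) (2 * Real.pi),
      f x * (c * Real.cos x + s * Real.sin x) < f x := by
  by_contra hcon
  push_neg at hcon
  have hone : ∀ x ∈ Set.Icc (0 : ℝ) (2 * Real.pi), 0 < f x →
      c * Real.cos x + s * Real.sin x = 1 := by
    intro x hx hfx
    have h1 : c * Real.cos x + s * Real.sin x ≤ 1 := by
      nlinarith [sq_nonneg (c * Real.sin x - s * Real.cos x),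
        Real.sin_sq_add_cos_sq x]
    have h2 := hcon x hx
    nlinarith
  have hev : ∀ᶠ x in nhdsWithin t₀ (Set.Icc (0 : ℝ) (2 * Real.pi)), 0 < f x :=
    (hcont t₀ ht₀).eventually (eventually_gt_nhds hf₀)
  rw [Filter.eventually_iff, Metric.mem_nhdsWithin_iff] at hev
  obtain ⟨ε, hε, hball⟩ := hev
  set ε' : ℝ := min ε 1 with hε'def
  have hε' : 0 < ε' := lt_min hε one_pos
  have hεε : ε' ≤ ε := min_le_left _ _
  have hε1 : ε' ≤ 1 := min_le_right _ _
  set a : ℝ := max 0 (t₀ - ε' / 2) with ha_def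
  set b : ℝ := min (2 * Real.pi) (t₀ + ε' / 2) with hb_def
  have hpi : (0 : ℝ) < 2 * Real.pi := by positivity
  have hab : a < b := by
    apply max_lt <;> apply lt_min
    · exact hpi
    · linarith [ht₀.1]
    · linarith [ht₀.2]
    · linarith
  have hmem : ∀ x ∈ Set.Icc a b, x ∈ Set.Icc (0 : ℝ) (2 * Real.pi) ∧ 0 < f x := by
    intro x hx
    have hx1 : (0 : ℝ) ≤ x := le_trans (le_max_left _ _) hx.1
    have hx2 : x ≤ 2 * Real.pi := le_trans hx.2 (min_le_left _ _)
    have h1 : t₀ - ε' / 2 ≤ x := le_trans (le_max_right _ _) hx.1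
    have h2 : x ≤ t₀ + ε' / 2 := le_trans hx.2 (min_le_right _ _)
    have hd : dist x t₀ < ε := by
      rw [Real.dist_eq, abs_lt]
      constructor <;> linarith
    exact ⟨⟨hx1, hx2⟩, hball ⟨Metric.mem_ball.2 hd, hx1, hx2⟩⟩
  have haI := hmem a ⟨le_rfl, hab.le⟩
  have hbI := hmem b ⟨hab.le, le_rfl⟩
  have h1a := hone a haI.1 haI.2
  have h1b := hone b hbI.1 hbI.2
  have hsa : (Real.cos a - c) ^ 2 + (Real.sin a - s) ^ 2 = 0 := by
    linear_combination Real.sin_sq_add_cos_sq a + hcs - 2 * h1a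
  have hsb : (Real.cos b - c) ^ 2 + (Real.sin b - s) ^ 2 = 0 := by
    linear_combination Real.sin_sq_add_cos_sq b + hcs - 2 * h1b
  have h2 : (2 : ℕ) ≠ 0 := by norm_num
  have ha0 := (add_eq_zero_iff_of_nonneg (sq_nonneg _) (sq_nonneg _)).mp hsa
  have hb0 := (add_eq_zero_iff_of_nonneg (sq_nonneg _) (sq_nonneg _)).mp hsb
  have eca : Real.cos a = c := sub_eq_zero.mp ((pow_eq_zero_iff h2).mp ha0.1)
  have esa : Real.sin a = s := sub_eq_zero.mp ((pow_eq_zero_iff h2).mp ha0.2)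
  have ecb : Real.cos b = c := sub_eq_zero.mp ((pow_eq_zero_iff h2).mp hb0.1)
  have esb : Real.sin b = s := sub_eq_zero.mp ((pow_eq_zero_iff h2).mp hb0.2)
  have hcos1 : Real.cos (b - a) = 1 := by
    rw [Real.cos_sub, eca, esa, ecb, esb]; linear_combination hcs
  have hba2 : b - a ≤ ε' := by
    have h1 : t₀ - ε' / 2 ≤ a := le_max_right _ _
    have h2 : b ≤ t₀ + ε' / 2 := min_le_right _ _
    linarith
  have : b - a = 0 := by
    refine (Real.cos_eq_one_iff_of_lt_of_lt ?_ ?_).1 hcos1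
    · linarith [Real.pi_gt_three]
    · linarith [Real.pi_gt_three]
  linarith

theorem strict_moment_inequality (f : ℝ → ℝ)
    (hcont : ContinuousOn f (Set.Icc (0 : ℝ) (2 * Real.pi)))
    (hpos : ∀ t ∈ Set.Icc (0 : ℝ) (2 * Real.pi), 0 ≤ f t)
    (hne : ∃ t ∈ Set.Icc (0 : ℝ) (2 * Real.pi), f t ≠ 0) :
    (∫ t in (0 : ℝ)..(2 * Real.pi), f t * Real.cos t) ^ 2 +
      (∫ t in (0 : ℝ)..(2 * Real.pi), f t * Real.sin t) ^ 2 <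
      (∫ t in (0 : ℝ)..(2 * Real.pi), f t) ^ 2 := by
  have hpi : (0 : ℝ) < 2 * Real.pi := by positivity
  obtain ⟨t₀, ht₀, ht₀ne⟩ := hne
  have hf₀ : 0 < f t₀ := lt_of_le_of_ne (hpos t₀ ht₀) (Ne.symm ht₀ne)
  set A : ℝ := ∫ t in (0 : ℝ)..(2 * Real.pi), f t * Real.cos t with hA
  set B : ℝ := ∫ t in (0 : ℝ)..(2 * Real.pi), f t * Real.sin t with hB
  set I : ℝ := ∫ t in (0 : ℝ)..(2 * Real.pi), f t with hI
  have hIpos : 0 < I :=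
    intervalIntegral.integral_pos hpi hcont (fun x hx => hpos x ⟨hx.1.le, hx.2⟩)
      ⟨t₀, ht₀, hf₀⟩
  have hccos : ContinuousOn (fun t => f t * Real.cos t) (Set.Icc (0 : ℝ) (2 * Real.pi)) :=
    hcont.mul Real.continuous_cos.continuousOn
  have hcsin : ContinuousOn (fun t => f t * Real.sin t) (Set.Icc (0 : ℝ) (2 * Real.pi)) :=
    hcont.mul Real.continuous_sin.continuousOn
  have hicos : IntervalIntegrable (fun t => f t * Real.cos t) volume 0 (2 * Real.pi) :=
    hccos.intervalIntegrable_of_Icc hpi.le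
  have hisin : IntervalIntegrable (fun t => f t * Real.sin t) volume 0 (2 * Real.pi) :=
    hcsin.intervalIntegrable_of_Icc hpi.le
  by_cases hAB : A = 0 ∧ B = 0
  · rw [hAB.1, hAB.2]
    have : 0 < I ^ 2 := by positivity
    simpa using this
  · have hABpos : 0 < A ^ 2 + B ^ 2 := by
      rcases not_and_or.mp hAB with h | h
      · have : 0 < A ^ 2 := by positivity
        nlinarith [sq_nonneg B]
      · have : 0 < B ^ 2 := by positivity
        nlinarith [sq_nonneg A]
    set R : ℝ := Real.sqrt (A ^ 2 + B ^ 2) with hRdef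
    have hR : 0 < R := Real.sqrt_pos.2 hABpos
    have hR2 : R ^ 2 = A ^ 2 + B ^ 2 := Real.sq_sqrt hABpos.le
    set c : ℝ := A / R with hc
    set s : ℝ := B / R with hs
    have hcs : c ^ 2 + s ^ 2 = 1 := by
      rw [hc, hs, div_pow, div_pow, ← add_div, hR2, div_self hABpos.ne']
    have hkey : ∫ t in (0 : ℝ)..(2 * Real.pi), f t * (c * Real.cos t + s * Real.sin t)
        = c * A + s * B := by
      have h1 : (fun t => f t * (c * Real.cos t + s * Real.sin t))
          = fun t => c * (f t * Real.cos t) + s * (f t * Real.sin t) := by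
        funext t; ring
      rw [h1, intervalIntegral.integral_add (hicos.const_mul c) (hisin.const_mul s),
        intervalIntegral.integral_const_mul, intervalIntegral.integral_const_mul]
    have hlt : (∫ t in (0 : ℝ)..(2 * Real.pi), f t * (c * Real.cos t + s * Real.sin t)) < I := by
      refine intervalIntegral.integral_lt_integral_of_continuousOn_of_le_of_exists_lt hpi
        (hcont.mul ((continuous_const.mul Real.continuous_cos).add
          (continuous_const.mul Real.continuous_sin)).continuousOn) hcont ?_ ?_
      · intro x hx
        have hb : c * Real.cos x + s * Real.sin x ≤ 1 := by
          nlinarith [sq_nonneg (c * Real.sin x - s * Real.cos x), Real.sin_sq_add_cos_sq x]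
        have hfx : 0 ≤ f x := hpos x ⟨hx.1.le, hx.2⟩
        nlinarith
      · exact exists_strict_pt f c s hcs hcont hpos ht₀ hf₀
    rw [hkey] at hlt
    have hRI : R < I := by
      have : c * A + s * B = R := by
        rw [hc, hs]
        field_simp
        linarith [hR2]
      linarith [this ▸ hlt]
    calc A ^ 2 + B ^ 2 = R ^ 2 := hR2.symm
      _ < I ^ 2 := by nlinarith
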